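/- For every odd natural number N, real c with 0 < c ≤ 1, and real x with 0 ≤ x < c/2, the ratio of the upper half binomial sum to c^N tends to 0: lim_{N→∞, N odd} (∑_{j=⌈N/2⌉}^{N} C(N,j) x^j (c-x)^{N-j}) / c^N = 0. -/

import Mathlib

open Finset Filter

/-- Upper half binomial sum ratio tends to 0 over odd `N` (encoded `N = 2k+1`). -/
theorem upper_half_binomial_ratio_tendsto_zero (c x : ℝ) (hc0 : 0 < c) (hc1 : c ≤ 1)
    (hx0 : 0 ≤ x) (hx : x < c / 2) :
    Tendsto (fun k : ℕ =>
        (∑ j ∈ Finset.Icc (k + 1) (2 * k + 1),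
          ((2 * k + 1).choose j : ℝ) * x ^ j * (c - x) ^ (2 * k + 1 - j)) / c ^ (2 * k + 1))
      atTop (nhds 0) := by
  have hxc : x ≤ c - x := by linarith
  have hcx0 : 0 ≤ c - x := by linarith
  set r : ℝ := 4 * x * (c - x) / c ^ 2 with hr
  have hr0 : 0 ≤ r := by positivity
  have hr1 : r < 1 := by
    rw [div_lt_one (by positivity)]
    nlinarith [sq_nonneg (c - 2 * x)]
  have hlim : Tendsto (fun k : ℕ => (2 * x / c) * r ^ k) atTop (nhds 0) := by
    have h := tendsto_pow_atTop_nhds_zero_of_lt_one hr0 hr1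
    simpa using h.const_mul (2 * x / c)
  refine tendsto_of_tendsto_of_tendsto_of_le_of_le tendsto_const_nhds hlim ?_ ?_
  · intro k
    apply div_nonneg _ (pow_nonneg hc0.le _)
    exact Finset.sum_nonneg fun j _ => by positivity
  · intro k
    rw [div_le_iff₀ (pow_pos hc0 _)]
    have key : (∑ j ∈ Finset.Icc (k + 1) (2 * k + 1),
        ((2 * k + 1).choose j : ℝ) * x ^ j * (c - x) ^ (2 * k + 1 - j))
        ≤ 2 ^ (2 * k + 1) * (x ^ (k + 1) * (c - x) ^ k) := by
      calc (∑ j ∈ Finset.Icc (k + 1) (2 * k + 1),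
            ((2 * k + 1).choose j : ℝ) * x ^ j * (c - x) ^ (2 * k + 1 - j))
          ≤ ∑ j ∈ Finset.Icc (k + 1) (2 * k + 1),
            ((2 * k + 1).choose j : ℝ) * (x ^ (k + 1) * (c - x) ^ k) := by
            apply Finset.sum_le_sum
            intro j hj
            simp only [Finset.mem_Icc] at hj
            rw [mul_assoc]
            apply mul_le_mul_of_nonneg_left _ (by positivity)
            set m := j - (k + 1) with hm
            have e2 : 2 * k + 1 - j = k - m := by omega
            have e1 : x ^ j = x ^ (k + 1) * x ^ m := by
              rw [← pow_add]; congr 1; omega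
            rw [e2, e1, mul_assoc]
            apply mul_le_mul_of_nonneg_left _ (by positivity)
            calc x ^ m * (c - x) ^ (k - m)
                ≤ (c - x) ^ m * (c - x) ^ (k - m) :=
                  mul_le_mul_of_nonneg_right (pow_le_pow_left₀ hx0 hxc m)
                    (pow_nonneg hcx0 _)
              _ = (c - x) ^ k := by rw [← pow_add]; congr 1; omega
        _ = (∑ j ∈ Finset.Icc (k + 1) (2 * k + 1), ((2 * k + 1).choose j : ℝ)) *
              (x ^ (k + 1) * (c - x) ^ k) := by rw [Finset.sum_mul]
        _ ≤ 2 ^ (2 * k + 1) * (x ^ (k + 1) * (c - x) ^ k) := by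
            apply mul_le_mul_of_nonneg_right _ (by positivity)
            calc (∑ j ∈ Finset.Icc (k + 1) (2 * k + 1), ((2 * k + 1).choose j : ℝ))
                ≤ ∑ j ∈ Finset.range (2 * k + 2), ((2 * k + 1).choose j : ℝ) := by
                  apply Finset.sum_le_sum_of_subset_of_nonneg
                  · intro j hj
                    simp only [Finset.mem_Icc] at hj
                    simp only [Finset.mem_range]
                    omega
                  · intro j _ _; positivity
              _ = 2 ^ (2 * k + 1) := by
                  rw [← Nat.cast_sum]
                  norm_cast
                  exact Nat.sum_range_choose (2 * k + 1)
    refine key.trans (le_of_eq ?_)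
    rw [hr]
    beta_reduce
    rw [div_pow, mul_pow, mul_pow, ← pow_mul, show (4:ℝ) ^ k = 2 ^ (2 * k) by rw [pow_mul]; norm_num]
    have hc : c ≠ 0 := hc0.ne'
    field_simp
    ring
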